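/- For m ≥ 2, the social choice function f1 defined by f1(P) = none if all ballots of P are abstentions, and f1(P) = some k* where k* is the smallest candidate index with Σ_{k*}(P) > 0 otherwise, satisfies reducibility to subsocieties (RS). -/

import Mathlib

/-- A voting profile for `m` candidates: a finite list of ballots, where a ballot
is `none` (abstention) or `some k` (a vote for candidate `k : Fin m`). -/
abbrev Profile (m : ℕ) := List (Option (Fin m))

/-- `votes P k` is the number of ballots in `P` for candidate `k` (Σ_k(P)). -/
def votes {m : ℕ} (P : Profile m) (k : Fin m) : ℕ := P.count (some k)

/-- Anonymity (A): the outcome is invariant under permutations of the voters. -/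
def Anonymous {m : ℕ} (f : Profile m → Option (Fin m)) : Prop :=
  ∀ P P' : Profile m, P.Perm P' → f P = f P'

/-- Neutrality (N): relabelling the candidates by a permutation relabels the outcome. -/
def Neutral {m : ℕ} (f : Profile m → Option (Fin m)) : Prop :=
  ∀ (τ : Equiv.Perm (Fin m)) (P : Profile m),
    f (P.map (Option.map τ)) = Option.map τ (f P)

/-- Duel property (DP): if every ballot is an abstention or a vote for `i` or `j`,
then the outcome is a tie or a win of `i` or `j`. -/
def DuelProperty {m : ℕ} (f : Profile m → Option (Fin m)) : Prop :=
  ∀ (i j : Fin m) (P : Profile m),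
    (∀ b ∈ P, b = none ∨ b = some i ∨ b = some j) →
    (f P = none ∨ f P = some i ∨ f P = some j)

/-- Pareto optimality (PO): if candidate `k` receives at least one vote and all other
candidates receive none, then `k` wins. -/
def ParetoOptimal {m : ℕ} (f : Profile m → Option (Fin m)) : Prop :=
  ∀ (P : Profile m) (k : Fin m),
    0 < votes P k → (∀ l : Fin m, l ≠ k → votes P l = 0) → f P = some k

/-- Reducibility to subsocieties (RS): for every profile with at least 2 voters,
the outcome equals the outcome on the profile of outcomes of all subsocieties
obtained by removing one voter. -/
def Reducible {m : ℕ} (f : Profile m → Option (Fin m)) : Prop :=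
  ∀ P : Profile m, 2 ≤ P.length →
    f P = f (List.ofFn fun l : Fin P.length => f (P.eraseIdx (l : ℕ)))

/-- The majority rule: `some k*` if `k*` has strictly more votes than every other
candidate, and `none` (a tie) otherwise. -/
noncomputable def Maj {m : ℕ} (P : Profile m) : Option (Fin m) :=
  if h : ∃ k : Fin m, ∀ l : Fin m, l ≠ k → votes P l < votes P k
  then some h.choose else none

/-- The rule `f1`: `none` if all ballots are abstentions, and otherwise the smallest
candidate index receiving at least one vote. -/
noncomputable def f1 {m : ℕ} (P : Profile m) : Option (Fin m) :=
  if h : ∃ k : Fin m, 0 < votes P k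
  then some ((Finset.univ.filter fun k : Fin m => 0 < votes P k).min'
      ⟨h.choose, Finset.mem_filter.mpr ⟨Finset.mem_univ _, h.choose_spec⟩⟩)
  else none


lemma votes_eraseIdx_le {m : ℕ} (P : Profile m) (l : ℕ) (j : Fin m) :
    votes (P.eraseIdx l) j ≤ votes P j :=
  (P.eraseIdx_sublist l).count_le _

lemma f1_eq_none_iff {m : ℕ} (P : Profile m) :
    f1 P = none ↔ ∀ k, votes P k = 0 := by
  unfold f1
  split_ifs with h
  · simp only [reduceCtorEq, false_iff]
    obtain ⟨k, hk⟩ := h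
    intro hall
    exact absurd (hall k) (by omega)
  · push_neg at h
    simp only [true_iff]
    intro k
    exact Nat.le_zero.mp (h k)

lemma f1_eq_some_iff {m : ℕ} (P : Profile m) (k : Fin m) :
    f1 P = some k ↔ 0 < votes P k ∧ ∀ j, 0 < votes P j → k ≤ j := by
  unfold f1
  split_ifs with h
  · rw [Option.some_inj]
    constructor
    · rintro rfl
      refine ⟨?_, ?_⟩
      · have := Finset.min'_mem (Finset.univ.filter fun k : Fin m => 0 < votes P k)
          ⟨h.choose, Finset.mem_filter.mpr ⟨Finset.mem_univ _, h.choose_spec⟩⟩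
        exact (Finset.mem_filter.mp this).2
      · intro j hj
        exact Finset.min'_le _ j (Finset.mem_filter.mpr ⟨Finset.mem_univ _, hj⟩)
    · rintro ⟨hk, hmin⟩
      apply le_antisymm
      · exact Finset.min'_le _ k (Finset.mem_filter.mpr ⟨Finset.mem_univ _, hk⟩)
      · have h2 := Finset.min'_mem (Finset.univ.filter fun k : Fin m => 0 < votes P k)
          ⟨k, Finset.mem_filter.mpr ⟨Finset.mem_univ _, hk⟩⟩
        exact hmin _ (Finset.mem_filter.mp h2).2
  · simp only [reduceCtorEq, false_iff]
    rintro ⟨hk, -⟩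
    exact h ⟨k, hk⟩

/-- `f1` satisfies reducibility to subsocieties (RS). -/
theorem stmt_12 (m : ℕ) (hm : 2 ≤ m) : Reducible (f1 (m := m)) := by
  intro P hP
  cases hf : f1 P with
  | none =>
    rw [f1_eq_none_iff] at hf
    have hg : ∀ l : Fin P.length, f1 (P.eraseIdx (l : ℕ)) = none := by
      intro l
      rw [f1_eq_none_iff]
      intro j
      have h1 := votes_eraseIdx_le P l j
      have h2 := hf j
      omega
    symm
    rw [f1_eq_none_iff]
    intro j
    rw [votes, List.count_eq_zero]
    intro hmem
    rw [List.mem_ofFn] at hmem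
    obtain ⟨l, hl⟩ := hmem
    rw [hg l] at hl
    exact nomatch hl
  | some k =>
    rw [f1_eq_some_iff] at hf
    obtain ⟨hk, hmin⟩ := hf
    have hmem : some k ∈ P := List.count_pos_iff.mp hk
    obtain ⟨i, hi, hPi⟩ := List.getElem_of_mem hmem
    have key : ∀ l : Fin P.length, (l : ℕ) ≠ i → f1 (P.eraseIdx (l : ℕ)) = some k := by
      intro l hl
      rw [f1_eq_some_iff]
      refine ⟨?_, fun j hj => hmin j (lt_of_lt_of_le hj (votes_eraseIdx_le P _ j))⟩
      rw [votes, List.count_pos_iff]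
      have hlen : (P.eraseIdx (l : ℕ)).length + 1 = P.length :=
        List.length_eraseIdx_add_one l.isLt
      rcases lt_or_gt_of_ne hl with h | h
      · -- l < i : some k at index i - 1 of eraseIdx
        have hj : i - 1 < (P.eraseIdx (l : ℕ)).length := by omega
        have := List.getElem_eraseIdx hj
        rw [dif_neg (by omega)] at this
        have : (P.eraseIdx (l : ℕ))[i-1] = some k := by
          rw [this]
          have : i - 1 + 1 = i := by omega
          simp only [this]
          exact hPi
        rw [← this]
        exact List.getElem_mem _
      · -- i < l : some k at index i
        have hj : i < (P.eraseIdx (l : ℕ)).length := by omega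
        have := List.getElem_eraseIdx hj
        rw [dif_pos (by omega)] at this
        rw [← hPi, ← this]
        exact List.getElem_mem _
    symm
    rw [f1_eq_some_iff]
    constructor
    · rw [votes, List.count_pos_iff, List.mem_ofFn]
      by_cases hi0 : i = 0
      · refine ⟨⟨1, by omega⟩, key _ (by simp [hi0])⟩
      · refine ⟨⟨0, by omega⟩, key _ (by simpa using Ne.symm hi0)⟩
    · intro j hj
      rw [votes, List.count_pos_iff, List.mem_ofFn] at hj
      obtain ⟨l, hl⟩ := hj
      rw [f1_eq_some_iff] at hl
      exact hmin j (lt_of_lt_of_le hl.1 (votes_eraseIdx_le P _ j))
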